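/- arXiv:1104.5661 — 2 statements merged into one kernel-verified Lean document; each statement's English description precedes it below -/
import Mathlib

section
/- Let G be a finite group with an absolutely irreducible faithful representation ρ : G → GL(n, ℤ) of odd degree n. Then every normal abelian subgroup A of G is an elementary abelian 2-group (i.e., every element of A has order dividing 2). -/
open Module Polynomial

private lemma aux_finrank_biSup {ι V : Type*} [AddCommGroup V] [Module ℂ V]
    [FiniteDimensional ℂ V] (E : ι → Submodule ℂ V) (hind : iSupIndep E)
    (s : Finset ι) :
    finrank ℂ ↥(⨆ χ ∈ s, E χ) = ∑ χ ∈ s, finrank ℂ ↥(E χ) := by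
  classical
  induction s using Finset.induction_on with
  | empty => simp
  | @insert a s ha ih =>
    rw [Finset.iSup_insert, Finset.sum_insert ha, ← ih]
    have hdisj : Disjoint (E a) (⨆ χ ∈ s, E χ) := hind.disjoint_biSup (by exact_mod_cast ha)
    have := Submodule.finrank_sup_add_finrank_inf_eq (E a) (⨆ χ ∈ s, E χ)
    rw [hdisj.eq_bot, finrank_bot, add_zero] at this
    exact this

/-- If a finite group has a faithful absolutely irreducible integral representation of
odd degree, then every normal abelian subgroup is elementary abelian of exponent 2. -/
theorem stmt_1 {G : Type*} [Group G] [Finite G] (n : ℕ) (hn : Odd n) (hpos : 0 < n)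
    (ρ : G →* GL (Fin n) ℤ) (hfaith : Function.Injective ρ)
    (hCirr : ∀ W : Submodule ℂ (Fin n → ℂ),
      (∀ (g : G) (v : Fin n → ℂ), v ∈ W →
        ((ρ g : Matrix (Fin n) (Fin n) ℤ).map (Int.cast : ℤ → ℂ)).mulVec v ∈ W) →
      W = ⊥ ∨ W = ⊤)
    (A : Subgroup G) (hA : A.Normal) (hAab : ∀ a ∈ A, ∀ b ∈ A, a * b = b * a) :
    ∀ a ∈ A, a ^ 2 = 1 := by
  classical
  cases nonempty_fintype G
  haveI : Nonempty (Fin n) := ⟨⟨0, hpos⟩⟩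
  set f : G → Module.End ℂ (Fin n → ℂ) :=
    fun g => ((ρ g : Matrix (Fin n) (Fin n) ℤ).map (Int.cast : ℤ → ℂ)).mulVecLin with hf
  have hcast : ∀ g : G, (ρ g : Matrix (Fin n) (Fin n) ℤ).map (Int.cast : ℤ → ℂ)
      = ((Int.castRingHom ℂ).mapMatrix (ρ g : Matrix (Fin n) (Fin n) ℤ)) := fun g => rfl
  have hf_mul : ∀ g h : G, f (g * h) = f g * f h := by
    intro g h
    have h1 : (ρ (g * h) : Matrix (Fin n) (Fin n) ℤ)
        = (ρ g : Matrix (Fin n) (Fin n) ℤ) * (ρ h : Matrix (Fin n) (Fin n) ℤ) := by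
      rw [map_mul]; rfl
    simp only [hf, hcast]
    rw [h1, map_mul, Matrix.mulVecLin_mul]
    rfl
  have hf_one : f 1 = 1 := by
    have h1 : (ρ (1 : G) : Matrix (Fin n) (Fin n) ℤ) = 1 := by rw [map_one]; rfl
    simp only [hf, hcast]
    rw [h1, map_one, Matrix.mulVecLin_one]
    rfl
  have hf_pow : ∀ (g : G) (k : ℕ), f (g ^ k) = (f g) ^ k := by
    intro g k
    induction k with
    | zero => simpa using hf_one
    | succ k ih => rw [pow_succ, pow_succ, hf_mul, ih]
  set m := Nat.card G with hmdef
  have hm : m ≠ 0 := Nat.card_pos.ne'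
  have hss : ∀ (g : G) (μ : ℂ), (f g).maxGenEigenspace μ = (f g).eigenspace μ := by
    intro g μ
    have hsemi : (f g).IsSemisimple := by
      apply Module.End.isSemisimple_of_squarefree_aeval_eq_zero
        (p := X ^ m - 1)
      · exact (Polynomial.X_pow_sub_one_separable_iff.mpr
          (by exact_mod_cast hm)).squarefree
      · rw [map_sub, map_pow, aeval_X, map_one, ← hf_pow, pow_card_eq_one', hf_one, sub_self]
    exact hsemi.isFinitelySemisimple.maxGenEigenspace_eq_eigenspace μ
  -- the commuting family indexed by A
  have hcommG : ∀ a b : ↥A, (↑(a * b) : G) = ↑(b * a) := by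
    intro a b
    exact_mod_cast hAab ↑a a.2 ↑b b.2
  have hcomm : ∀ a b : ↥A, Commute (f ↑a) (f ↑b) := by
    intro a b
    have h1 : f (↑a * ↑b) = f (↑b * ↑a) := by
      have := hcommG a b
      push_cast at this
      rw [this]
    unfold Commute SemiconjBy
    rw [← hf_mul, ← hf_mul, h1]
  set E : (↥A → ℂ) → Submodule ℂ (Fin n → ℂ) :=
    fun χ => ⨅ a : ↥A, (f ↑a).eigenspace (χ a) with hE
  have hEmax : ∀ χ : ↥A → ℂ, (⨅ a : ↥A, (f ↑a).maxGenEigenspace (χ a)) = E χ :=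
    fun χ => iInf_congr fun a => hss ↑a (χ a)
  have hsupE : ⨆ χ : ↥A → ℂ, E χ = ⊤ := by
    rw [← iSup_congr hEmax]
    exact Module.End.iSup_iInf_maxGenEigenspace_eq_top_of_iSup_maxGenEigenspace_eq_top_of_commute
      (fun a : ↥A => f ↑a) (fun a b _ => hcomm a b)
      (fun a => Module.End.iSup_maxGenEigenspace_eq_top _)
  have hind : iSupIndep E := by
    have := Module.End.independent_iInf_maxGenEigenspace_of_forall_mapsTo
      (fun a : ↥A => f ↑a)
      (fun i j φ => Module.End.mapsTo_maxGenEigenspace_of_comm (hcomm j i) φ)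
    rwa [funext hEmax] at this
  have hmemE : ∀ (χ : ↥A → ℂ) (v : Fin n → ℂ),
      v ∈ E χ ↔ ∀ a : ↥A, f ↑a v = χ a • v := by
    intro χ v
    simp [hE, Submodule.mem_iInf, Module.End.mem_eigenspace_iff]
  -- a simultaneous eigenvector
  have hex : ∃ χ : ↥A → ℂ, E χ ≠ ⊥ := by
    by_contra hno
    push_neg at hno
    rw [iSup_congr hno, iSup_const] at hsupE
    exact bot_ne_top (α := Submodule ℂ (Fin n → ℂ)) hsupE
  obtain ⟨χ₀, hχ₀⟩ := hex
  obtain ⟨v₀, hv₀mem, hv₀⟩ := Submodule.exists_mem_ne_zero_of_ne_bot hχ₀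
  -- conjugated characters
  have hconjA : ∀ (g : G) (a : ↥A), g⁻¹ * ↑a * g ∈ A := by
    intro g a
    have := hA.conj_mem ↑a a.2 g⁻¹
    simpa using this
  set cconj : G → ↥A → ↥A := fun g a => ⟨g⁻¹ * ↑a * g, hconjA g a⟩ with hcconj
  set χconj : G → ↥A → ℂ := fun g a => χ₀ (cconj g a) with hχconj
  set w : G → (Fin n → ℂ) := fun g => f g v₀ with hwdef
  have hw : ∀ g : G, w g ∈ E (χconj g) := by
    intro g
    rw [hmemE]
    intro a
    have h1 : (↑a : G) * g = g * (g⁻¹ * ↑a * g) := by group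
    have : f ↑a (w g) = f ((↑a : G) * g) v₀ := by rw [hf_mul]; rfl
    rw [this, h1, hf_mul]
    have h2 : f (g⁻¹ * ↑a * g) v₀ = χ₀ (cconj g a) • v₀ := (hmemE χ₀ v₀).mp hv₀mem (cconj g a)
    show f g (f (g⁻¹ * ↑a * g) v₀) = χconj g a • w g
    rw [h2, map_smul]
  -- the span of the orbit of v₀ is everything
  set W : Submodule ℂ (Fin n → ℂ) := Submodule.span ℂ (Set.range w) with hWdef
  have hWinv : ∀ (g : G) (v : Fin n → ℂ), v ∈ W →
      ((ρ g : Matrix (Fin n) (Fin n) ℤ).map (Int.cast : ℤ → ℂ)).mulVec v ∈ W := by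
    intro g v hv
    show f g v ∈ W
    clear hCirr
    induction hv using Submodule.span_induction with
    | mem x hx =>
      obtain ⟨g', rfl⟩ := hx
      have : f g (w g') = w (g * g') := by rw [hwdef]; show f g (f g' v₀) = f (g * g') v₀; rw [hf_mul]; rfl
      rw [this]
      exact Submodule.subset_span ⟨g * g', rfl⟩
    | zero => simp only [map_zero]; exact Submodule.zero_mem W
    | add x y _ _ hx hy => rw [map_add]; exact Submodule.add_mem W hx hy
    | smul c x _ hx => rw [map_smul]; exact Submodule.smul_mem W c hx
  have hWtop : W = ⊤ := by
    rcases hCirr W hWinv with h | h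
    · exfalso
      have : v₀ ∈ W := by
        have : w 1 = v₀ := by rw [hwdef]; show f 1 v₀ = v₀; rw [hf_one]; rfl
        rw [← this]
        exact Submodule.subset_span ⟨1, rfl⟩
      rw [h] at this
      exact hv₀ (Submodule.mem_bot ℂ |>.mp this)
    · exact h
  -- every occurring character is conjugate to χ₀
  have horbit : ∀ χ : ↥A → ℂ, E χ ≠ ⊥ → ∃ g : G, χ = χconj g := by
    intro χ hχ
    by_contra hno
    push_neg at hno
    have hnotmem : χ ∉ Set.range χconj := by
      rintro ⟨g, rfl⟩
      exact hno g rfl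
    have h1 : Disjoint (E χ) (⨆ ψ ∈ Set.range χconj, E ψ) := hind.disjoint_biSup hnotmem
    have h2 : (⊤ : Submodule ℂ (Fin n → ℂ)) ≤ ⨆ ψ ∈ Set.range χconj, E ψ := by
      rw [← hWtop, hWdef]
      apply Submodule.span_le.mpr
      rintro x ⟨g, rfl⟩
      exact (le_biSup E (⟨g, rfl⟩ : χconj g ∈ Set.range χconj)) (hw g)
    exact hχ (h1.eq_bot_of_le (le_trans le_top h2))
  -- eigenvalues are roots of unity
  have hpowv : ∀ (χ : ↥A → ℂ) (v : Fin n → ℂ), v ∈ E χ → ∀ (a : ↥A) (k : ℕ),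
      f (↑a ^ k) v = χ a ^ k • v := by
    intro χ v hv a k
    induction k with
    | zero => rw [pow_zero, pow_zero, hf_one, one_smul]; rfl
    | succ k ih =>
      rw [pow_succ, hf_mul]
      show f (↑a ^ k) (f ↑a v) = _
      rw [(hmemE χ v).mp hv a, map_smul, ih, pow_succ, smul_smul, mul_comm]
  have hroot : ∀ χ : ↥A → ℂ, E χ ≠ ⊥ → ∀ a : ↥A, χ a ^ m = 1 := by
    intro χ hχ a
    obtain ⟨v, hvmem, hv⟩ := Submodule.exists_mem_ne_zero_of_ne_bot hχ
    have h1 : f (↑a ^ m) v = χ a ^ m • v := hpowv χ v hvmem a m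
    have h2 : (↑a : G) ^ m = 1 := pow_card_eq_one'
    rw [h2, hf_one] at h1
    have h3 : (χ a ^ m - 1) • v = 0 := by
      rw [sub_smul, one_smul, ← h1]; exact sub_eq_zero_of_eq rfl
    rcases smul_eq_zero.mp h3 with h | h
    · exact sub_eq_zero.mp h
    · exact absurd h hv
  -- complex conjugation
  have hmulVec_star : ∀ (g : G) (v : Fin n → ℂ), f g (star v) = star (f g v) := by
    intro g v
    funext i
    show ((ρ g : Matrix (Fin n) (Fin n) ℤ).map (Int.cast : ℤ → ℂ)).mulVec (star v) i
      = star (((ρ g : Matrix (Fin n) (Fin n) ℤ).map (Int.cast : ℤ → ℂ)).mulVec v i)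
    simp only [Matrix.mulVec, dotProduct, Matrix.map_apply, Pi.star_apply]
    rw [star_sum]
    congr 1
    funext j
    rw [star_mul', star_intCast]
  have hstar : ∀ (χ : ↥A → ℂ) (v : Fin n → ℂ), v ∈ E χ →
      star v ∈ E (fun a => star (χ a)) := by
    intro χ v hv
    rw [hmemE]
    intro a
    rw [hmulVec_star, (hmemE χ v).mp hv a, star_smul]
  have hstarbot : ∀ χ : ↥A → ℂ, E χ ≠ ⊥ → E (fun a => star (χ a)) ≠ ⊥ := by
    intro χ hχ
    obtain ⟨v, hvmem, hv⟩ := Submodule.exists_mem_ne_zero_of_ne_bot hχ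
    exact Submodule.ne_bot_iff _ |>.mpr ⟨star v, hstar χ v hvmem, star_ne_zero.mpr hv⟩
  -- conjugate eigenspaces have the same dimension
  have hdim : ∀ χ : ↥A → ℂ,
      finrank ℂ ↥(E (fun a => star (χ a))) = finrank ℂ ↥(E χ) := by
    intro χ
    have hback : ∀ v : Fin n → ℂ, v ∈ E (fun a => star (χ a)) → star v ∈ E χ := by
      intro v hv
      have h := hstar _ v hv
      have : (fun a => star (star (χ a))) = χ := by funext a; rw [star_star]
      rwa [this] at h
    let e : ↥(E χ) ≃ₗ[ℝ] ↥(E (fun a => star (χ a))) :=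
      { toFun := fun x => ⟨star x.1, hstar χ x.1 x.2⟩
        invFun := fun y => ⟨star y.1, hback y.1 y.2⟩
        map_add' := by intro x y; ext : 1; exact star_add _ _
        map_smul' := by
          intro r x
          ext : 1
          show star (r • x.1) = r • star x.1
          rw [star_smul, star_trivial]
        left_inv := fun x => by ext : 1; exact star_star _
        right_inv := fun y => by ext : 1; exact star_star _ }
    have h1 : finrank ℝ ℂ * finrank ℂ ↥(E χ) = finrank ℝ ↥(E χ) :=
      Module.finrank_mul_finrank ℝ ℂ _
    have h2 : finrank ℝ ℂ * finrank ℂ ↥(E (fun a => star (χ a)))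
        = finrank ℝ ↥(E (fun a => star (χ a))) := Module.finrank_mul_finrank ℝ ℂ _
    have h3 : finrank ℝ ↥(E χ) = finrank ℝ ↥(E (fun a => star (χ a))) := e.finrank_eq
    rw [Complex.finrank_real_complex] at h1 h2
    omega
  -- counting
  set T : Finset (↥A → ℂ) := Finset.image χconj Finset.univ with hT
  set T' : Finset (↥A → ℂ) := T.filter (fun χ => E χ ≠ ⊥) with hT'
  have hwne : ∀ g : G, w g ≠ 0 := by
    intro g h0
    have h1 : f g⁻¹ (w g) = v₀ := by
      show f g⁻¹ (f g v₀) = v₀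
      rw [← Module.End.mul_apply, ← hf_mul, inv_mul_cancel, hf_one]
      rfl
    rw [h0, map_zero] at h1
    exact hv₀ h1.symm
  have hTne : ∀ g : G, χconj g ∈ T' := by
    intro g
    refine Finset.mem_filter.mpr ⟨Finset.mem_image.mpr ⟨g, Finset.mem_univ g, rfl⟩, ?_⟩
    exact Submodule.ne_bot_iff _ |>.mpr ⟨w g, hw g, hwne g⟩
  have htop' : ⨆ χ ∈ T', E χ = ⊤ := by
    apply le_antisymm le_top
    rw [← hWtop, hWdef]
    apply Submodule.span_le.mpr
    rintro x ⟨g, rfl⟩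
    exact (le_biSup E (hTne g)) (hw g)
  have hcount : ∑ χ ∈ T', finrank ℂ ↥(E χ) = n := by
    rw [← aux_finrank_biSup E hind T', htop', finrank_top, Module.finrank_fin_fun]
  -- parity: there is a real character
  have hfix : ∃ χ ∈ T', (fun a => star (χ a)) = χ := by
    by_contra hno
    push_neg at hno
    have hzero : ∑ χ ∈ T', ((finrank ℂ ↥(E χ) : ZMod 2)) = 0 := by
      have hg1 : ∀ (χ : ↥A → ℂ) (hχ : χ ∈ T'),
          ((finrank ℂ ↥(E χ) : ZMod 2)) + ((finrank ℂ ↥(E (fun a => star (χ a))) : ZMod 2)) = 0 := by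
        intro χ hχ
        rw [hdim χ, ← two_mul, show (2 : ZMod 2) = 0 from rfl, zero_mul]
      have hmem : ∀ (χ : ↥A → ℂ) (hχ : χ ∈ T'), (fun a => star (χ a)) ∈ T' := by
        intro χ hχ
        have hne : E χ ≠ ⊥ := (Finset.mem_filter.mp hχ).2
        have hne' := hstarbot χ hne
        obtain ⟨g, hg⟩ := horbit _ hne'
        refine Finset.mem_filter.mpr ⟨?_, hne'⟩
        rw [hg]
        exact Finset.mem_image.mpr ⟨g, Finset.mem_univ g, rfl⟩
      exact Finset.sum_involution (fun χ _ => fun a => star (χ a)) hg1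
        (fun χ hχ _ => hno χ hχ) (fun χ hχ => hmem χ hχ)
        (fun χ hχ => by funext a; exact star_star (χ a))
    rw [← Nat.cast_sum, hcount, ZMod.natCast_eq_zero_iff] at hzero
    obtain ⟨k, hk⟩ := hn
    omega
  -- the real character has values ±1
  obtain ⟨χs, hχsT, hχs⟩ := hfix
  have hχs_sq : ∀ a : ↥A, χs a ^ 2 = 1 := by
    intro a
    have hr : star (χs a) = χs a := congrFun hχs a
    have hm1 : χs a ^ m = 1 := hroot χs (Finset.mem_filter.mp hχsT).2 a
    have him : (χs a).im = 0 := Complex.conj_eq_iff_im.mp hr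
    have hxc : χs a = ((χs a).re : ℂ) := Complex.conj_eq_iff_re.mp hr |>.symm
    have hxm : (χs a).re ^ m = 1 := by
      have : (((χs a).re : ℂ)) ^ m = 1 := by rw [← hxc]; exact hm1
      exact_mod_cast this
    rcases (pow_eq_one_iff_of_ne_zero hm).mp hxm with h | ⟨h, -⟩
    · rw [hxc, h]; norm_num
    · rw [hxc, h]; norm_num
  obtain ⟨g₀, -, hg₀⟩ := Finset.mem_image.mp (Finset.mem_filter.mp hχsT).1
  have hχ₀sq : ∀ c : ↥A, χ₀ c ^ 2 = 1 := by
    intro c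
    have hb : g₀ * ↑c * g₀⁻¹ ∈ A := hA.conj_mem ↑c c.2 g₀
    have h1 : cconj g₀ ⟨g₀ * ↑c * g₀⁻¹, hb⟩ = c := by
      rw [hcconj]
      apply Subtype.ext
      show g₀⁻¹ * (g₀ * ↑c * g₀⁻¹) * g₀ = ↑c
      group
    have h2 : χ₀ c = χconj g₀ ⟨g₀ * ↑c * g₀⁻¹, hb⟩ := by
      rw [hχconj]
      dsimp only
      rw [h1]
    rw [h2, hg₀]
    exact hχs_sq _
  have hconj_sq : ∀ (g : G) (a : ↥A), χconj g a ^ 2 = 1 := by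
    intro g a
    rw [hχconj]
    exact hχ₀sq _
  -- conclusion
  intro a ha
  have hfaa : ∀ v : Fin n → ℂ, f (a * a) v = v := by
    intro v
    have hv : v ∈ ⨆ χ : {χ : ↥A → ℂ // χ ∈ T'}, E χ.1 := by
      have h1 : v ∈ (⊤ : Submodule ℂ (Fin n → ℂ)) := Submodule.mem_top
      rw [← htop'] at h1
      rw [iSup_subtype]
      exact h1
    refine Submodule.iSup_induction (motive := fun v => f (a * a) v = v) _ hv ?_ ?_ ?_
    · rintro ⟨χ, hχT'⟩ x hx
      obtain ⟨g, -, hg⟩ := Finset.mem_image.mp (Finset.mem_filter.mp hχT').1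
      have hsq : χ ⟨a, ha⟩ ^ 2 = 1 := by rw [← hg]; exact hconj_sq g _
      have hax : f ↑(⟨a, ha⟩ : ↥A) x = χ ⟨a, ha⟩ • x := (hmemE χ x).mp hx ⟨a, ha⟩
      have : f (a * a) x = f a (f a x) := by
        rw [hf_mul]; rfl
      rw [this]
      have hax' : f a x = χ ⟨a, ha⟩ • x := hax
      rw [hax', map_smul, hax', smul_smul, ← pow_two, hsq, one_smul]
    · exact map_zero _
    · intro x y hx hy
      rw [map_add, hx, hy]
  have hmat : (ρ (a * a) : Matrix (Fin n) (Fin n) ℤ).map (Int.cast : ℤ → ℂ)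
      = (1 : Matrix (Fin n) (Fin n) ℂ) := by
    have h1 : Matrix.toLin' ((ρ (a * a) : Matrix (Fin n) (Fin n) ℤ).map (Int.cast : ℤ → ℂ))
        = Matrix.toLin' (1 : Matrix (Fin n) (Fin n) ℂ) := by
      apply LinearMap.ext
      intro v
      rw [Matrix.toLin'_apply, Matrix.toLin'_apply, Matrix.one_mulVec]
      exact hfaa v
    exact Matrix.toLin'.injective h1
  have hval : (ρ (a * a) : Matrix (Fin n) (Fin n) ℤ) = 1 := by
    have h2 : (ρ (a * a) : Matrix (Fin n) (Fin n) ℤ).map (Int.cast : ℤ → ℂ)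
        = (1 : Matrix (Fin n) (Fin n) ℤ).map (Int.cast : ℤ → ℂ) := by
      rw [hmat, Matrix.map_one _ Int.cast_zero Int.cast_one]
    ext i j
    have h3 : ((ρ (a * a) : Matrix (Fin n) (Fin n) ℤ).map (Int.cast : ℤ → ℂ)) i j
        = ((1 : Matrix (Fin n) (Fin n) ℤ).map (Int.cast : ℤ → ℂ)) i j := by rw [h2]
    simp only [Matrix.map_apply] at h3
    exact_mod_cast h3
  have haa : a * a = 1 := by
    apply hfaith
    rw [map_one]
    exact Units.ext hval
  rw [pow_two]
  exact haa
end

section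
/- Let ρ : G → GL(n, ℤ) be a faithful ℝ-irreducible representation of a finite group G. Then the normalizer of ρ(G) in GL(n, ℤ) is a finite group. -/
open Matrix

open scoped MatrixOrder in
private lemma aux_eig {n : ℕ} (hn : 0 < n) {B S : Matrix (Fin n) (Fin n) ℝ}
    (hB : B.PosDef) (hS : S.IsHermitian) :
    ∃ (t : ℝ) (v : Fin n → ℝ), v ≠ 0 ∧ S *ᵥ v = t • (B *ᵥ v) := by
  classical
  set C := CFC.sqrt B with hCdef
  have hCC : C * C = B := by rw [← sq]; exact CFC.sq_sqrt B hB.posSemidef.nonneg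
  have hdetB : B.det ≠ 0 := ne_of_gt hB.det_pos
  have hdetC : IsUnit C.det := by
    refine isUnit_iff_ne_zero.mpr fun h => hdetB ?_
    rw [← hCC, Matrix.det_mul, h, zero_mul]
  have hCi : C * C⁻¹ = 1 := Matrix.mul_nonsing_inv _ hdetC
  have hCH : C⁻¹.IsHermitian := ((CFC.sqrt_nonneg B).posSemidef.isHermitian).inv
  set M := C⁻¹ * S * C⁻¹ with hMdef
  have hMH : M.IsHermitian := by
    show Mᴴ = M
    rw [hMdef, Matrix.conjTranspose_mul, Matrix.conjTranspose_mul, hCH.eq, hS.eq,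
      Matrix.mul_assoc]
  set i0 : Fin n := ⟨0, hn⟩
  set w : Fin n → ℝ := ⇑(hMH.eigenvectorBasis i0) with hwdef
  have hw : M *ᵥ w = hMH.eigenvalues i0 • w := hMH.mulVec_eigenvectorBasis i0
  have hwne : w ≠ 0 := by
    have := hMH.eigenvectorBasis.orthonormal.ne_zero i0
    intro h
    exact this (by ext k; exact congrFun h k)
  refine ⟨hMH.eigenvalues i0, C⁻¹ *ᵥ w, ?_, ?_⟩
  · intro h
    apply hwne
    have hcw : C *ᵥ (C⁻¹ *ᵥ w) = w := by
      rw [Matrix.mulVec_mulVec, hCi, Matrix.one_mulVec]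
    rw [h, Matrix.mulVec_zero] at hcw
    exact hcw.symm
  · have h1 : B *ᵥ (C⁻¹ *ᵥ w) = C *ᵥ w := by
      rw [Matrix.mulVec_mulVec, ← hCC, Matrix.mul_assoc, hCi, mul_one]
    have hSC : S * C⁻¹ = C * M := by
      rw [hMdef, ← Matrix.mul_assoc, ← Matrix.mul_assoc, hCi, one_mul]
    have h2 : S *ᵥ (C⁻¹ *ᵥ w) = hMH.eigenvalues i0 • (C *ᵥ w) := by
      rw [Matrix.mulVec_mulVec, hSC, ← Matrix.mulVec_mulVec, hw, Matrix.mulVec_smul]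
    rw [h1, h2]

private lemma aux_sum_mulVec {n : ℕ} {ι : Type*} (s : Finset ι)
    (M : ι → Matrix (Fin n) (Fin n) ℝ) (v : Fin n → ℝ) :
    (∑ i ∈ s, M i) *ᵥ v = ∑ i ∈ s, (M i *ᵥ v) := by
  classical
  induction s using Finset.induction with
  | empty => simp
  | insert _ _ h ih => simp [Finset.sum_insert h, Matrix.add_mulVec, ih]

private lemma aux_dot_sum {n : ℕ} {ι : Type*} (s : Finset ι)
    (w : ι → (Fin n → ℝ)) (v : Fin n → ℝ) :
    v ⬝ᵥ (∑ i ∈ s, w i) = ∑ i ∈ s, v ⬝ᵥ w i := by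
  classical
  induction s using Finset.induction with
  | empty => simp
  | insert _ _ h ih => simp [Finset.sum_insert h, ih]

/-- quadratic form identity over ℝ -/
private lemma aux_quad {n : ℕ} (A B : Matrix (Fin n) (Fin n) ℝ) (x : Fin n → ℝ) :
    x ⬝ᵥ ((Aᴴ * B * A) *ᵥ x) = (A *ᵥ x) ⬝ᵥ (B *ᵥ (A *ᵥ x)) := by
  rw [← Matrix.mulVec_mulVec, ← Matrix.mulVec_mulVec, Matrix.dotProduct_mulVec,
    Matrix.conjTranspose_eq_transpose_of_trivial, Matrix.vecMul_transpose]

private lemma aux_dot_self_nonneg {n : ℕ} (v : Fin n → ℝ) : 0 ≤ v ⬝ᵥ v :=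
  Finset.sum_nonneg fun i _ => mul_self_nonneg (v i)

private lemma aux_dot_self_pos {n : ℕ} {v : Fin n → ℝ} (hv : v ≠ 0) : 0 < v ⬝ᵥ v := by
  obtain ⟨i, hi⟩ := Function.ne_iff.mp hv
  exact Finset.sum_pos' (fun j _ => mul_self_nonneg (v j))
    ⟨i, Finset.mem_univ i, mul_self_pos.mpr hi⟩

private lemma aux_int_abs_le_sq (m : ℤ) : |m| ≤ m ^ 2 := by
  rcases eq_or_ne m 0 with h | h
  · simp [h]
  · calc |m| = |m| * 1 := (mul_one _).symm
      _ ≤ |m| * |m| := mul_le_mul_of_nonneg_left (Int.one_le_abs h) (abs_nonneg m)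
      _ = m ^ 2 := by rw [← sq_abs]; ring

/-- The normalizer in GL(n,ℤ) of the image of a faithful ℝ-irreducible integral
representation of a finite group is finite. -/
theorem stmt_14 {G : Type*} [Group G] [Finite G] (n : ℕ)
    (ρ : G →* GL (Fin n) ℤ) (hfaith : Function.Injective ρ)
    (hRirr : ∀ W : Submodule ℝ (Fin n → ℝ),
      (∀ (g : G) (v : Fin n → ℝ), v ∈ W →
        ((ρ g : Matrix (Fin n) (Fin n) ℤ).map (Int.cast : ℤ → ℝ)).mulVec v ∈ W) →
      W = ⊥ ∨ W = ⊤) :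
    Finite (Subgroup.normalizer (ρ.range : Set (GL (Fin n) ℤ))) := by
  classical
  rcases Nat.eq_zero_or_pos n with hn | hn
  · subst hn
    haveI : Subsingleton (Matrix (Fin 0) (Fin 0) ℤ) :=
      ⟨fun a b => by ext i; exact i.elim0⟩
    haveI : Finite (GL (Fin 0) ℤ) :=
      Finite.of_injective (fun u => ((u : GL (Fin 0) ℤ) : Matrix (Fin 0) (Fin 0) ℤ))
        fun a b h => Units.ext h
    infer_instance
  haveI := Fintype.ofFinite G
  set φ : Matrix (Fin n) (Fin n) ℤ →+* Matrix (Fin n) (Fin n) ℝ :=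
    (Int.castRingHom ℝ).mapMatrix with hφ
  set Rg : G → Matrix (Fin n) (Fin n) ℝ := fun g => φ ((ρ g : Matrix (Fin n) (Fin n) ℤ)) with hRg
  have hRcast : ∀ g : G, ((ρ g : Matrix (Fin n) (Fin n) ℤ).map (Int.cast : ℤ → ℝ)) = Rg g :=
    fun g => rfl
  have hRmul : ∀ g h : G, Rg g * Rg h = Rg (g * h) := by
    intro g h
    rw [hRg]
    simp only
    rw [← _root_.map_mul φ]
    congr 1
    rw [_root_.map_mul ρ]
    rfl
  have hR1 : Rg 1 = 1 := by
    rw [hRg]; simp only; rw [_root_.map_one ρ]; exact _root_.map_one φ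
  have hRinv : ∀ g : G, Rg g⁻¹ * Rg g = 1 := fun g => by
    rw [hRmul, inv_mul_cancel, hR1]
  set B : Matrix (Fin n) (Fin n) ℝ := ∑ g : G, (Rg g)ᴴ * Rg g with hBdef
  have hquad : ∀ v : Fin n → ℝ,
      v ⬝ᵥ (B *ᵥ v) = ∑ g : G, (Rg g *ᵥ v) ⬝ᵥ (Rg g *ᵥ v) := by
    intro v
    rw [hBdef, aux_sum_mulVec, aux_dot_sum]
    refine Finset.sum_congr rfl fun g _ => ?_
    rw [← Matrix.mulVec_mulVec, Matrix.dotProduct_mulVec,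
      Matrix.conjTranspose_eq_transpose_of_trivial, Matrix.vecMul_transpose]
  have hBherm : B.IsHermitian := by
    show Bᴴ = B
    rw [hBdef, Matrix.conjTranspose_sum]
    refine Finset.sum_congr rfl fun g _ => ?_
    rw [Matrix.conjTranspose_mul, Matrix.conjTranspose_conjTranspose]
  have hBpd : B.PosDef := by
    refine Matrix.PosDef.of_dotProduct_mulVec_pos hBherm fun x hx => ?_
    rw [star_trivial, hquad]
    refine Finset.sum_pos' (fun g _ => aux_dot_self_nonneg _) ⟨1, Finset.mem_univ 1, ?_⟩
    rw [hR1, Matrix.one_mulVec]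
    exact aux_dot_self_pos hx
  have hBinv : ∀ g : G, (Rg g)ᴴ * B * Rg g = B := by
    intro h
    rw [hBdef, Finset.mul_sum, Finset.sum_mul]
    rw [← Equiv.sum_comp (Equiv.mulRight h) (fun g => (Rg g)ᴴ * Rg g)]
    refine Finset.sum_congr rfl fun g _ => ?_
    simp only [Equiv.coe_mulRight]
    rw [← hRmul, Matrix.conjTranspose_mul, Matrix.mul_assoc, Matrix.mul_assoc, Matrix.mul_assoc]
  set K : ℤ := ∑ g : G, ∑ i : Fin n, ∑ k : Fin n, ((ρ g : Matrix (Fin n) (Fin n) ℤ) i k) ^ 2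
    with hKdef
  have key : ∀ Dm : GL (Fin n) ℤ, Dm ∈ Subgroup.normalizer (ρ.range : Set (GL (Fin n) ℤ)) →
      ∀ i j : Fin n, |(Dm : Matrix (Fin n) (Fin n) ℤ) i j| ≤ K := by
    intro Dm hD i j
    have hmem : ∀ g : G, ∃ g' : G, ρ g' = Dm * ρ g * Dm⁻¹ := by
      intro g
      obtain ⟨g', hg'⟩ := (Subgroup.mem_normalizer_iff.mp hD (ρ g)).mp ⟨g, rfl⟩
      exact ⟨g', hg'⟩
    choose σ hσ using hmem
    have hσinj : Function.Injective σ := by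
      intro a b hab
      apply hfaith
      have h2 : Dm * ρ a * Dm⁻¹ = Dm * ρ b * Dm⁻¹ := by rw [← hσ a, ← hσ b, hab]
      have h3 := mul_right_cancel h2
      exact mul_left_cancel h3
    set Dr : Matrix (Fin n) (Fin n) ℝ := φ ((Dm : Matrix (Fin n) (Fin n) ℤ)) with hDrdef
    set Dr' : Matrix (Fin n) (Fin n) ℝ := φ (((Dm⁻¹ : GL (Fin n) ℤ) : Matrix (Fin n) (Fin n) ℤ))
      with hDr'def
    have hDrR : Dr * Dr' = 1 := by
      rw [hDrdef, hDr'def, ← _root_.map_mul φ, ← Units.val_mul, mul_inv_cancel, Units.val_one,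
        _root_.map_one]
    have hDrL : Dr' * Dr = 1 := by
      rw [hDrdef, hDr'def, ← _root_.map_mul φ, ← Units.val_mul, inv_mul_cancel, Units.val_one,
        _root_.map_one]
    have hDrmul : ∀ g : G, Dr * Rg g = Rg (σ g) * Dr := by
      intro g
      have h1 : ρ (σ g) * Dm = Dm * ρ g := by
        rw [hσ g, mul_assoc, inv_mul_cancel, mul_one]
      have h2 : ((ρ (σ g)) : Matrix (Fin n) (Fin n) ℤ) * ((Dm : Matrix (Fin n) (Fin n) ℤ))
          = ((Dm : Matrix (Fin n) (Fin n) ℤ)) * ((ρ g : Matrix (Fin n) (Fin n) ℤ)) := by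
        have := congrArg Units.val h1
        rwa [Units.val_mul, Units.val_mul] at this
      rw [hDrdef, hRg]
      simp only
      rw [← _root_.map_mul φ, ← _root_.map_mul φ, ← h2]
    set S : Matrix (Fin n) (Fin n) ℝ := Drᴴ * B * Dr with hSdef
    have hSinv : ∀ g : G, (Rg g)ᴴ * S * Rg g = S := by
      intro g
      calc (Rg g)ᴴ * (Drᴴ * B * Dr) * Rg g
          = (Dr * Rg g)ᴴ * B * (Dr * Rg g) := by
            rw [Matrix.conjTranspose_mul]
            simp only [Matrix.mul_assoc]
        _ = (Rg (σ g) * Dr)ᴴ * B * (Rg (σ g) * Dr) := by rw [hDrmul]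
        _ = Drᴴ * ((Rg (σ g))ᴴ * B * Rg (σ g)) * Dr := by
            rw [Matrix.conjTranspose_mul]
            simp only [Matrix.mul_assoc]
        _ = S := by rw [hBinv, hSdef]
    have hSherm : S.IsHermitian := by
      show Sᴴ = S
      rw [hSdef, Matrix.conjTranspose_mul, Matrix.conjTranspose_mul,
        Matrix.conjTranspose_conjTranspose, hBherm.eq, Matrix.mul_assoc]
    obtain ⟨t, v, hvne, hveq⟩ := aux_eig hn hBpd hSherm
    set W : Submodule ℝ (Fin n → ℝ) := LinearMap.ker (Matrix.mulVecLin (S - t • B)) with hWdef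
    have hWmem : ∀ u : Fin n → ℝ, u ∈ W ↔ (S - t • B) *ᵥ u = 0 := by
      intro u
      rw [hWdef, LinearMap.mem_ker, Matrix.mulVecLin_apply]
    have hcomm : ∀ g : G, (S - t • B) * Rg g = (Rg g⁻¹)ᴴ * (S - t • B) := by
      intro g
      have hS' : S * Rg g = (Rg g⁻¹)ᴴ * S := by
        calc S * Rg g = ((Rg g⁻¹)ᴴ * S * Rg g⁻¹) * Rg g := by rw [hSinv g⁻¹]
          _ = (Rg g⁻¹)ᴴ * S * (Rg g⁻¹ * Rg g) := by simp only [Matrix.mul_assoc]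
          _ = (Rg g⁻¹)ᴴ * S := by
              rw [hRmul, inv_mul_cancel, hR1, Matrix.mul_one]
      have hB' : B * Rg g = (Rg g⁻¹)ᴴ * B := by
        calc B * Rg g = ((Rg g⁻¹)ᴴ * B * Rg g⁻¹) * Rg g := by rw [hBinv g⁻¹]
          _ = (Rg g⁻¹)ᴴ * B * (Rg g⁻¹ * Rg g) := by simp only [Matrix.mul_assoc]
          _ = (Rg g⁻¹)ᴴ * B := by
              rw [hRmul, inv_mul_cancel, hR1, Matrix.mul_one]
      rw [Matrix.sub_mul, Matrix.mul_sub, hS', Matrix.smul_mul, Matrix.mul_smul, hB']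
    have hWinv : ∀ (g : G) (u : Fin n → ℝ), u ∈ W →
        ((ρ g : Matrix (Fin n) (Fin n) ℤ).map (Int.cast : ℤ → ℝ)).mulVec u ∈ W := by
      intro g u hu
      rw [hWmem] at hu ⊢
      rw [hRcast g, Matrix.mulVec_mulVec, hcomm g, ← Matrix.mulVec_mulVec, hu,
        Matrix.mulVec_zero]
    have hvW : v ∈ W := by
      rw [hWmem, Matrix.sub_mulVec, hveq, Matrix.smul_mulVec, sub_self]
    have hStB : S = t • B := by
      rcases hRirr W hWinv with hbot | htop
      · exact absurd (hbot ▸ hvW) (by simpa using hvne)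
      · have hall : ∀ u : Fin n → ℝ, (S - t • B) *ᵥ u = 0 := by
          intro u
          exact (hWmem u).mp (htop ▸ Submodule.mem_top)
        have hzero : S - t • B = 0 := by
          ext a b
          have h0 := congrFun (hall (Pi.single b 1)) a
          rw [Matrix.mulVec_single] at h0
          simpa using h0
        exact sub_eq_zero.mp hzero
    have hBposq : ∀ u : Fin n → ℝ, u ≠ 0 → 0 < u ⬝ᵥ (B *ᵥ u) := by
      intro u hu
      have := hBpd.dotProduct_mulVec_pos hu
      rwa [star_trivial] at this
    have hSposq : ∀ u : Fin n → ℝ, u ≠ 0 → 0 < u ⬝ᵥ (S *ᵥ u) := by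
      intro u hu
      rw [hSdef, aux_quad]
      apply hBposq
      intro h0
      apply hu
      have h1 : Dr' *ᵥ (Dr *ᵥ u) = u := by
        rw [Matrix.mulVec_mulVec, hDrL, Matrix.one_mulVec]
      rw [h0, Matrix.mulVec_zero] at h1
      exact h1.symm
    have hu0 : (Pi.single (⟨0, hn⟩ : Fin n) (1 : ℝ) : Fin n → ℝ) ≠ 0 := by
      intro h
      have := congrFun h ⟨0, hn⟩
      simp at this
    have htpos : 0 < t := by
      have h1 := hSposq _ hu0
      have h2 := hBposq _ hu0
      rw [hStB, Matrix.smul_mulVec, dotProduct_smul, smul_eq_mul] at h1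
      nlinarith
    have htn : t ^ n = 1 := by
      have hdet1 : S.det = B.det := by
        have hud : ((Dm : Matrix (Fin n) (Fin n) ℤ).det : ℝ) ^ 2 = Dr.det ^ 2 := by
          rw [hDrdef, hφ, ← RingHom.map_det]
          rfl
        have hu2 : IsUnit (Dm : Matrix (Fin n) (Fin n) ℤ).det := by
          apply IsUnit.of_mul_eq_one ((Dm⁻¹ : GL (Fin n) ℤ) : Matrix (Fin n) (Fin n) ℤ).det
          rw [← Matrix.det_mul, ← Units.val_mul, mul_inv_cancel, Units.val_one, Matrix.det_one]
        have hDr2 : Dr.det ^ 2 = 1 := by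
          rw [← hud]
          rcases Int.isUnit_iff.mp hu2 with h | h <;> rw [h] <;> norm_num
        rw [hSdef, Matrix.det_mul, Matrix.det_mul, Matrix.det_conjTranspose, star_trivial]
        calc Dr.det * B.det * Dr.det = Dr.det ^ 2 * B.det := by ring
          _ = B.det := by rw [hDr2, one_mul]
      rw [hStB, Matrix.det_smul, Fintype.card_fin] at hdet1
      have hBd : B.det ≠ 0 := ne_of_gt hBpd.det_pos
      exact mul_right_cancel₀ hBd (by rw [hdet1, one_mul])
    have ht1 : t = 1 := by
      rcases lt_trichotomy t 1 with h | h | h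
      · have hlt : t ^ n < 1 := pow_lt_one₀ (le_of_lt htpos) h (by omega)
        rw [htn] at hlt
        exact absurd hlt (lt_irrefl 1)
      · exact h
      · have hlt : 1 < t ^ n := one_lt_pow₀ h (by omega)
        rw [htn] at hlt
        exact absurd hlt (lt_irrefl 1)
    have hfix : Drᴴ * B * Dr = B := by
      have := hStB
      rw [ht1, one_smul] at this
      rw [← hSdef, this]
    -- now the bound
    set u : Fin n → ℝ := Pi.single j 1 with hu
    set w : Fin n → ℝ := Dr *ᵥ u with hw
    have hwB : w ⬝ᵥ (B *ᵥ w) = u ⬝ᵥ (B *ᵥ u) := by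
      rw [hw, ← aux_quad, hfix]
    have hww : w ⬝ᵥ w ≤ w ⬝ᵥ (B *ᵥ w) := by
      rw [hquad w]
      have h1 : (Rg 1 *ᵥ w) ⬝ᵥ (Rg 1 *ᵥ w) = w ⬝ᵥ w := by rw [hR1, Matrix.one_mulVec]
      have h2 : (Rg 1 *ᵥ w) ⬝ᵥ (Rg 1 *ᵥ w) ≤ ∑ g : G, (Rg g *ᵥ w) ⬝ᵥ (Rg g *ᵥ w) :=
        Finset.single_le_sum (f := fun g => (Rg g *ᵥ w) ⬝ᵥ (Rg g *ᵥ w))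
          (fun g _ => aux_dot_self_nonneg _) (Finset.mem_univ 1)
      rw [h1] at h2
      exact h2
    have hwi : w i = ((Dm : Matrix (Fin n) (Fin n) ℤ) i j : ℝ) := by
      rw [hw, hu, Matrix.mulVec_single]
      simp [hDrdef, hφ]
    have hsq : (((Dm : Matrix (Fin n) (Fin n) ℤ) i j : ℝ)) ^ 2 ≤ w ⬝ᵥ w := by
      rw [← hwi]
      have : w i * w i ≤ ∑ k, w k * w k :=
        Finset.single_le_sum (fun k _ => mul_self_nonneg (w k)) (Finset.mem_univ i)
      calc w i ^ 2 = w i * w i := sq (w i) ▸ by ring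
        _ ≤ ∑ k, w k * w k := this
        _ = w ⬝ᵥ w := rfl
    have hub : u ⬝ᵥ (B *ᵥ u) ≤ (K : ℝ) := by
      rw [hquad u, hKdef]
      push_cast
      refine Finset.sum_le_sum fun g _ => ?_
      have hcol : ∀ a : Fin n, (Rg g *ᵥ u) a = ((ρ g : Matrix (Fin n) (Fin n) ℤ) a j : ℝ) := by
        intro a
        rw [hu, Matrix.mulVec_single]
        simp [hRg, hφ]
      calc (Rg g *ᵥ u) ⬝ᵥ (Rg g *ᵥ u)
          = ∑ a, ((ρ g : Matrix (Fin n) (Fin n) ℤ) a j : ℝ) ^ 2 := by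
            refine Finset.sum_congr rfl fun a _ => ?_
            rw [hcol a, sq]
        _ ≤ ∑ a, ∑ k, ((ρ g : Matrix (Fin n) (Fin n) ℤ) a k : ℝ) ^ 2 := by
            refine Finset.sum_le_sum fun a _ => ?_
            exact Finset.single_le_sum
              (f := fun k => ((ρ g : Matrix (Fin n) (Fin n) ℤ) a k : ℝ) ^ 2)
              (fun k _ => sq_nonneg _) (Finset.mem_univ j)
    have hfinal : (((Dm : Matrix (Fin n) (Fin n) ℤ) i j : ℝ)) ^ 2 ≤ (K : ℝ) := by
      calc (((Dm : Matrix (Fin n) (Fin n) ℤ) i j : ℝ)) ^ 2 ≤ w ⬝ᵥ w := hsq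
        _ ≤ w ⬝ᵥ (B *ᵥ w) := hww
        _ = u ⬝ᵥ (B *ᵥ u) := hwB
        _ ≤ (K : ℝ) := hub
    have hint : ((Dm : Matrix (Fin n) (Fin n) ℤ) i j) ^ 2 ≤ K := by exact_mod_cast hfinal
    exact le_trans (aux_int_abs_le_sq _) hint
  haveI : Finite ↥(Set.Icc (-K) K) := (Set.finite_Icc (-K) K).to_subtype
  refine Finite.of_injective (fun D : Subgroup.normalizer (ρ.range : Set (GL (Fin n) ℤ)) =>
    (fun i j => (⟨((D : GL (Fin n) ℤ) : Matrix (Fin n) (Fin n) ℤ) i j,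
      Set.mem_Icc.mpr (abs_le.mp (key D D.2 i j))⟩ : Set.Icc (-K) K))) ?_
  intro D1 D2 h
  apply Subtype.ext
  apply Units.ext
  ext i j
  exact congrArg Subtype.val (congrFun (congrFun h i) j)
end
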